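/- arXiv:0712.2972 — 2 statements merged into one kernel-verified Lean document; each statement's English description precedes it below -/
import Mathlib

section
/- The limit as d → +∞ of H(d) = ∫_{arccosh(d)}^{∞} d/√(cosh²u − d²) du equals π/2. -/
open MeasureTheory Set Real Filter Topology

noncomputable def arccosh (x : ℝ) : ℝ := Real.log (x + Real.sqrt (x ^ 2 - 1))



lemma cosh_arccosh {d : ℝ} (hd : 1 < d) : Real.cosh (arccosh d) = d := by
  have hs : Real.sqrt (d ^ 2 - 1) ^ 2 = d ^ 2 - 1 := Real.sq_sqrt (by nlinarith)
  have hs0 : 0 ≤ Real.sqrt (d ^ 2 - 1) := Real.sqrt_nonneg _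
  have ht : 0 < d + Real.sqrt (d ^ 2 - 1) := by nlinarith
  rw [arccosh, Real.cosh_eq, Real.exp_log ht, Real.exp_neg, Real.exp_log ht]
  field_simp
  nlinarith

lemma sinh_arccosh {d : ℝ} (hd : 1 < d) : Real.sinh (arccosh d) = Real.sqrt (d ^ 2 - 1) := by
  have hs : Real.sqrt (d ^ 2 - 1) ^ 2 = d ^ 2 - 1 := Real.sq_sqrt (by nlinarith)
  have hs0 : 0 ≤ Real.sqrt (d ^ 2 - 1) := Real.sqrt_nonneg _
  have ht : 0 < d + Real.sqrt (d ^ 2 - 1) := by nlinarith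
  rw [arccosh, Real.sinh_eq, Real.exp_log ht, Real.exp_neg, Real.exp_log ht]
  field_simp
  nlinarith

/-- the rescaled inner expression -/
noncomputable def Ee (d w : ℝ) : ℝ :=
  Real.sinh w * ((2 - d⁻¹ ^ 2) * Real.sinh w + 2 * Real.sqrt (1 - d⁻¹ ^ 2) * Real.cosh w)

lemma cosh_identity {d : ℝ} (hd : 1 < d) (w : ℝ) :
    Real.cosh (w + arccosh d) ^ 2 - d ^ 2 = d ^ 2 * Ee d w := by
  have hd0 : (0:ℝ) < d := by linarith
  rw [Real.cosh_add, cosh_arccosh hd, sinh_arccosh hd, Ee]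
  have hc : Real.cosh w ^ 2 = Real.sinh w ^ 2 + 1 := Real.cosh_sq w
  have hs : Real.sqrt (d ^ 2 - 1) ^ 2 = d ^ 2 - 1 := Real.sq_sqrt (by nlinarith)
  have hss : Real.sqrt (d ^ 2 - 1) = d * Real.sqrt (1 - d⁻¹ ^ 2) := by
    rw [← Real.sqrt_sq hd0.le, ← Real.sqrt_mul (sq_nonneg d)]
    congr 1
    field_simp
    rw [Real.sq_sqrt (sq_nonneg d)]
  rw [hss] at hs ⊢
  have hdinv : d ^ 2 * d⁻¹ ^ 2 = 1 := by field_simp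
  linear_combination (d ^ 2) * hc + (Real.sinh w ^ 2) * hs + (Real.sinh w ^ 2) * hdinv

lemma g_eq {d : ℝ} (hd : 1 < d) (w : ℝ) :
    d / Real.sqrt (Real.cosh (w + arccosh d) ^ 2 - d ^ 2) = 1 / Real.sqrt (Ee d w) := by
  have hd0 : (0:ℝ) < d := by linarith
  rw [cosh_identity hd, Real.sqrt_mul (sq_nonneg d), Real.sqrt_sq hd0.le,
    div_mul_eq_div_div]
  rw [div_self hd0.ne']

lemma Ee_limit (w : ℝ) : Real.sinh w * (2 * Real.sinh w + 2 * Real.cosh w)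
    = Real.exp (2 * w) - 1 := by
  have h : Real.sinh w + Real.cosh w = Real.exp w := Real.sinh_add_cosh w
  have h2 : Real.exp (2 * w) = Real.exp w * Real.exp w := by rw [two_mul, Real.exp_add]
  have h3 : Real.exp (-w) * Real.exp w = 1 := by rw [← Real.exp_add]; simp
  have h4 : Real.sinh w = (Real.exp w - Real.exp (-w)) / 2 := Real.sinh_eq w
  rw [h2]
  linear_combination (2 * Real.sinh w) * h + (2 * Real.exp w) * h4 - h3

lemma Ee_tendsto (w : ℝ) :
    Tendsto (fun d : ℝ => Ee d w) atTop (𝓝 (Real.exp (2 * w) - 1)) := by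
  have h0 : Tendsto (fun d : ℝ => d⁻¹ ^ 2) atTop (𝓝 0) := by
    simpa using (tendsto_inv_atTop_zero : Tendsto (fun x : ℝ => x⁻¹) atTop (𝓝 0)).pow 2
  have hφ : Continuous (fun t : ℝ =>
      Real.sinh w * ((2 - t) * Real.sinh w + 2 * Real.sqrt (1 - t) * Real.cosh w)) := by
    exact continuous_const.mul (((continuous_const.sub continuous_id).mul continuous_const).add
      ((continuous_const.mul (Real.continuous_sqrt.comp (continuous_const.sub continuous_id))).mul
        continuous_const))
  have := (hφ.tendsto 0).comp h0
  simp only [Function.comp_def] at this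
  have heq : Real.sinh w * ((2 - 0) * Real.sinh w + 2 * Real.sqrt (1 - 0) * Real.cosh w)
      = Real.exp (2 * w) - 1 := by
    rw [← Ee_limit w]; simp [Real.sqrt_one]
  rwa [heq] at this

lemma exp_sub_one_pos {w : ℝ} (hw : 0 < w) : 0 < Real.exp (2 * w) - 1 := by
  have : (1:ℝ) < Real.exp (2 * w) := by
    rw [← Real.exp_zero]; exact Real.exp_lt_exp.mpr (by linarith)
  linarith

lemma g_tendsto {w : ℝ} (hw : 0 < w) :
    Tendsto (fun d : ℝ => d / Real.sqrt (Real.cosh (w + arccosh d) ^ 2 - d ^ 2)) atTop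
      (𝓝 (1 / Real.sqrt (Real.exp (2 * w) - 1))) := by
  have hL := exp_sub_one_pos hw
  have hsL : Real.sqrt (Real.exp (2 * w) - 1) ≠ 0 := (Real.sqrt_pos.mpr hL).ne'
  have h1 : Tendsto (fun d : ℝ => 1 / Real.sqrt (Ee d w)) atTop
      (𝓝 (1 / Real.sqrt (Real.exp (2 * w) - 1))) := by
    simp only [one_div]
    exact ((Real.continuous_sqrt.tendsto _).comp (Ee_tendsto w)).inv₀ hsL
  apply h1.congr'
  filter_upwards [eventually_gt_atTop (1:ℝ)] with d hd
  exact (g_eq hd w).symm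

lemma g_bound {d w : ℝ} (hd : 2 ≤ d) (hw : 0 < w) :
    d / Real.sqrt (Real.cosh (w + arccosh d) ^ 2 - d ^ 2)
      ≤ Real.sqrt 2 / Real.sqrt (Real.exp (2 * w) - 1) := by
  have hd1 : (1:ℝ) < d := by linarith
  rw [g_eq hd1 w]
  have hsinh : 0 < Real.sinh w := Real.sinh_pos_iff.2 hw
  have hcosh : 0 < Real.cosh w := Real.cosh_pos w
  have hinv : d⁻¹ ^ 2 ≤ 1/4 := by
    have h1 : d⁻¹ ≤ 1/2 := by
      rw [inv_le_comm₀ (by linarith) (by norm_num)]; linarith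
    have h2 : (0:ℝ) ≤ d⁻¹ := by positivity
    nlinarith
  have hsq : (1:ℝ)/2 ≤ Real.sqrt (1 - d⁻¹ ^ 2) := by
    rw [show (1:ℝ)/2 = Real.sqrt (1/4) by
      rw [show (1:ℝ)/4 = (1/2)^2 by norm_num, Real.sqrt_sq]; norm_num]
    exact Real.sqrt_le_sqrt (by linarith)
  have hE : (Real.exp (2 * w) - 1) / 2 ≤ Ee d w := by
    have hlim := Ee_limit w
    unfold Ee
    have e1 : 0 ≤ Real.sinh w * Real.sinh w * (1 - d⁻¹ ^ 2) := by nlinarith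
    have e2 : 0 ≤ Real.sinh w * Real.cosh w * (2 * Real.sqrt (1 - d⁻¹ ^ 2) - 1) :=
      mul_nonneg (mul_pos hsinh hcosh).le (by linarith)
    nlinarith [e1, e2]
  have hE0 : 0 < Ee d w := lt_of_lt_of_le (by linarith [exp_sub_one_pos hw]) hE
  have hL := exp_sub_one_pos hw
  rw [div_le_div_iff₀ (Real.sqrt_pos.mpr hE0) (Real.sqrt_pos.mpr hL), one_mul]
  rw [← Real.sqrt_mul (by norm_num)]
  apply Real.sqrt_le_sqrt
  linarith

lemma measurable_g (d : ℝ) :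
    Measurable (fun w : ℝ => d / Real.sqrt (Real.cosh (w + arccosh d) ^ 2 - d ^ 2)) := by
  apply Measurable.div measurable_const
  exact (Real.continuous_sqrt.comp ((Real.continuous_cosh.comp
    (continuous_id.add continuous_const)).pow 2 |>.sub continuous_const)).measurable

lemma shift (a : ℝ) (f : ℝ → ℝ) : ∫ u in Set.Ioi a, f u = ∫ w in Set.Ioi (0:ℝ), f (w + a) := by
  have h : MeasurePreserving (fun w : ℝ => w + a) volume volume :=
    measurePreserving_add_right volume a
  have e : MeasurableEmbedding (fun w : ℝ => w + a) :=
    (MeasurableEquiv.addRight a).measurableEmbedding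
  rw [← h.setIntegral_preimage_emb e f (Set.Ioi a)]
  congr 1
  ext w
  simp

noncomputable def Fa (x : ℝ) : ℝ := Real.arctan (Real.sqrt (Real.exp (2*x) - 1))

lemma Fa_deriv {x : ℝ} (hx : x ∈ Set.Ioi (0:ℝ)) :
    HasDerivAt Fa (1 / Real.sqrt (Real.exp (2*x) - 1)) x := by
  have hx0 : (0:ℝ) < x := hx
  have hy : 0 < Real.exp (2*x) - 1 := by
    have : (1:ℝ) < Real.exp (2*x) := by
      rw [← Real.exp_zero]; exact Real.exp_lt_exp.mpr (by linarith)
    linarith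
  have h1 : HasDerivAt (fun x : ℝ => 2*x) 2 x := by
    simpa using (hasDerivAt_id x).const_mul 2
  have h3 : HasDerivAt (fun x : ℝ => Real.exp (2*x) - 1) (Real.exp (2*x) * 2) x :=
    h1.exp.sub_const 1
  have h5 : HasDerivAt (fun x : ℝ => Real.sqrt (Real.exp (2*x) - 1))
      (1 / (2 * Real.sqrt (Real.exp (2*x) - 1)) * (Real.exp (2*x) * 2)) x :=
    (Real.hasDerivAt_sqrt hy.ne').comp x h3
  have h7 := (Real.hasDerivAt_arctan (Real.sqrt (Real.exp (2*x) - 1))).comp x h5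
  refine h7.congr_deriv ?_
  have hs : Real.sqrt (Real.exp (2*x) - 1) ^ 2 = Real.exp (2*x) - 1 := Real.sq_sqrt hy.le
  have hs0 : 0 < Real.sqrt (Real.exp (2*x) - 1) := Real.sqrt_pos.mpr hy
  rw [hs]
  have he : 1 + (Real.exp (2*x) - 1) = Real.exp (2*x) := by ring
  rw [he]
  field_simp

lemma Fa_tendsto : Tendsto Fa atTop (𝓝 (π/2)) := by
  have h1 : Tendsto (fun x : ℝ => Real.exp (2*x) - 1) atTop atTop :=
    (Real.tendsto_exp_atTop.comp (tendsto_const_nhds.pos_mul_atTop two_pos tendsto_id)).atTop_add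
      tendsto_const_nhds
  have hsq : Tendsto Real.sqrt atTop atTop := by
    apply tendsto_atTop_atTop.2
    intro b
    refine ⟨b^2, fun a ha => ?_⟩
    calc b ≤ |b| := le_abs_self b
    _ = Real.sqrt (b^2) := (Real.sqrt_sq_eq_abs b).symm
    _ ≤ Real.sqrt a := Real.sqrt_le_sqrt ha
  have h2 : Tendsto (fun x : ℝ => Real.sqrt (Real.exp (2*x) - 1)) atTop atTop :=
    hsq.comp h1
  have := (Real.tendsto_arctan_atTop.mono_right nhdsWithin_le_nhds).comp h2
  exact this

lemma key_integral : ∫ w in Set.Ioi (0:ℝ), 1 / Real.sqrt (Real.exp (2*w) - 1) = π/2 := by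
  have hcont : ContinuousWithinAt Fa (Set.Ici 0) 0 := by
    apply Continuous.continuousWithinAt
    exact Real.continuous_arctan.comp ((Real.continuous_exp.comp (continuous_const.mul continuous_id)).sub continuous_const).sqrt
  have h := integral_Ioi_of_hasDerivAt_of_nonneg hcont (fun x hx => Fa_deriv hx)
    (fun x hx => by positivity) Fa_tendsto
  rw [h]
  simp [Fa]

lemma key_integrable : IntegrableOn (fun w => 1 / Real.sqrt (Real.exp (2*w) - 1)) (Set.Ioi (0:ℝ)) := by
  have hcont : ContinuousWithinAt Fa (Set.Ici 0) 0 := by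
    apply Continuous.continuousWithinAt
    exact Real.continuous_arctan.comp ((Real.continuous_exp.comp (continuous_const.mul continuous_id)).sub continuous_const).sqrt
  exact integrableOn_Ioi_deriv_of_nonneg hcont (fun x hx => Fa_deriv hx)
    (fun x hx => by positivity) Fa_tendsto

noncomputable def H (d : ℝ) : ℝ :=
  ∫ u in Set.Ioi (arccosh d), d / Real.sqrt (Real.cosh u ^ 2 - d ^ 2)

/-- `H(d) → π/2` as `d → +∞`. -/
theorem stmt_2 : Tendsto H atTop (𝓝 (Real.pi / 2)) := by
  have hshift : ∀ d : ℝ, H d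
      = ∫ w in Set.Ioi (0:ℝ), d / Real.sqrt (Real.cosh (w + arccosh d) ^ 2 - d ^ 2) := by
    intro d
    rw [H]
    exact shift (arccosh d) (fun u => d / Real.sqrt (Real.cosh u ^ 2 - d ^ 2))
  rw [show (Real.pi / 2 : ℝ) = ∫ w in Set.Ioi (0:ℝ), 1 / Real.sqrt (Real.exp (2*w) - 1)
    from key_integral.symm]
  have h := MeasureTheory.tendsto_integral_filter_of_dominated_convergence
    (μ := volume.restrict (Set.Ioi (0:ℝ))) (l := atTop)
    (F := fun d w => d / Real.sqrt (Real.cosh (w + arccosh d) ^ 2 - d ^ 2))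
    (f := fun w => 1 / Real.sqrt (Real.exp (2*w) - 1))
    (bound := fun w => Real.sqrt 2 / Real.sqrt (Real.exp (2*w) - 1))
    (Eventually.of_forall fun d => (measurable_g d).aestronglyMeasurable)
    (by
      filter_upwards [eventually_ge_atTop (2:ℝ)] with d hd
      rw [ae_restrict_iff' measurableSet_Ioi]
      refine Eventually.of_forall fun w hw => ?_
      rw [Real.norm_eq_abs, abs_of_nonneg (div_nonneg (by linarith) (Real.sqrt_nonneg _))]
      exact g_bound hd hw)
    (by
      have := key_integrable.const_mul (Real.sqrt 2)
      simpa [mul_one_div, div_eq_mul_inv] using this)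
    (by
      rw [ae_restrict_iff' measurableSet_Ioi]
      exact Eventually.of_forall fun w hw => g_tendsto hw)
  exact h.congr fun d => (hshift d).symm
end

section
/- For 0 < d < 1, the improper integral G(d) = ∫_0^∞ d/√(cosh²u − d²) du converges, G is nondecreasing in d on (0,1), G(d) → 0 as d → 0⁺, and G(d) → +∞ as d → 1⁻. -/
open MeasureTheory Set Real Filter Topology

noncomputable def G (d : ℝ) : ℝ :=
  ∫ u in Set.Ioi (0 : ℝ), d / Real.sqrt (Real.cosh u ^ 2 - d ^ 2)

lemma aux_pos {d : ℝ} (hd0 : 0 < d) (hd1 : d < 1) (u : ℝ) :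
    0 < Real.cosh u ^ 2 - d ^ 2 := by
  have h1 : (1:ℝ) ≤ Real.cosh u := Real.one_le_cosh u
  nlinarith

lemma sqrt_lower {d : ℝ} (hd0 : 0 < d) (hd1 : d < 1) (u : ℝ) :
    Real.sqrt (1 - d ^ 2) * Real.cosh u ≤ Real.sqrt (Real.cosh u ^ 2 - d ^ 2) := by
  have h1 : (1:ℝ) ≤ Real.cosh u := Real.one_le_cosh u
  have hc2 : (1:ℝ) ≤ Real.cosh u ^ 2 := by nlinarith
  have h2 : (1 - d ^ 2) * Real.cosh u ^ 2 ≤ Real.cosh u ^ 2 - d ^ 2 := by nlinarith [sq_nonneg d]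
  calc Real.sqrt (1 - d ^ 2) * Real.cosh u
      = Real.sqrt ((1 - d ^ 2) * Real.cosh u ^ 2) := by
        rw [Real.sqrt_mul (by nlinarith), Real.sqrt_sq (by linarith)]
    _ ≤ _ := Real.sqrt_le_sqrt h2

lemma inv_cosh_le (u : ℝ) : 1 / Real.cosh u ≤ 2 * Real.exp (-u) := by
  rw [div_le_iff₀ (Real.cosh_pos u), Real.cosh_eq]
  have h : Real.exp (-u) * Real.exp u = 1 := by rw [← Real.exp_add]; simp
  nlinarith [Real.exp_pos (-u), sq_nonneg (Real.exp (-u))]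

lemma pointwise_bound {d : ℝ} (hd0 : 0 < d) (hd1 : d < 1) (u : ℝ) :
    d / Real.sqrt (Real.cosh u ^ 2 - d ^ 2)
      ≤ d / Real.sqrt (1 - d ^ 2) * (2 * Real.exp (-u)) := by
  have hcosh : (0:ℝ) < Real.cosh u := Real.cosh_pos u
  have hs : 0 < Real.sqrt (1 - d ^ 2) := Real.sqrt_pos.2 (by nlinarith)
  have h1 : d / Real.sqrt (Real.cosh u ^ 2 - d ^ 2)
      ≤ d / (Real.sqrt (1 - d ^ 2) * Real.cosh u) := by
    apply div_le_div_of_nonneg_left hd0.le (by positivity) (sqrt_lower hd0 hd1 u)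
  refine h1.trans ?_
  rw [← div_div, div_eq_mul_one_div (d / Real.sqrt (1 - d ^ 2))]
  exact mul_le_mul_of_nonneg_left (inv_cosh_le u) (by positivity)

lemma integrable_stmt {d : ℝ} (hd0 : 0 < d) (hd1 : d < 1) :
    IntegrableOn (fun u : ℝ => d / Real.sqrt (Real.cosh u ^ 2 - d ^ 2)) (Set.Ioi 0) := by
  have hg : IntegrableOn (fun u : ℝ => d / Real.sqrt (1 - d ^ 2) * (2 * Real.exp (-u)))
      (Set.Ioi 0) := by
    have := (exp_neg_integrableOn_Ioi (0:ℝ) (one_pos)).const_mul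
      (d / Real.sqrt (1 - d ^ 2) * 2)
    simpa [IntegrableOn, mul_assoc, neg_mul, one_mul] using this
  refine hg.mono' ?_ ?_
  · apply Measurable.aestronglyMeasurable
    fun_prop
  · filter_upwards with u
    rw [Real.norm_eq_abs, abs_of_nonneg (by positivity)]
    exact pointwise_bound hd0 hd1 u

lemma G_nonneg {d : ℝ} (hd0 : 0 ≤ d) : 0 ≤ G d := by
  apply integral_nonneg
  intro u
  positivity

lemma G_le {d : ℝ} (hd0 : 0 < d) (hd1 : d < 1) :
    G d ≤ d / Real.sqrt (1 - d ^ 2) * 2 := by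
  have hg : IntegrableOn (fun u : ℝ => d / Real.sqrt (1 - d ^ 2) * (2 * Real.exp (-u)))
      (Set.Ioi 0) := by
    have := (exp_neg_integrableOn_Ioi (0:ℝ) (one_pos)).const_mul
      (d / Real.sqrt (1 - d ^ 2) * 2)
    simpa [IntegrableOn, mul_assoc, neg_mul, one_mul] using this
  have h := setIntegral_mono (integrable_stmt hd0 hd1) hg (fun u => pointwise_bound hd0 hd1 u)
  refine h.trans ?_
  rw [MeasureTheory.integral_const_mul]
  have : (∫ u in Set.Ioi (0:ℝ), 2 * Real.exp (-u)) = 2 := by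
    rw [MeasureTheory.integral_const_mul, integral_exp_neg_Ioi_zero]; ring
  rw [this]

lemma G_mono : MonotoneOn G (Set.Ioo (0:ℝ) 1) := by
  intro a ha b hb hab
  apply setIntegral_mono_on (integrable_stmt ha.1 ha.2) (integrable_stmt hb.1 hb.2)
    measurableSet_Ioi
  intro u _
  have h1 : Real.sqrt (Real.cosh u ^ 2 - b ^ 2) ≤ Real.sqrt (Real.cosh u ^ 2 - a ^ 2) :=
    Real.sqrt_le_sqrt (by nlinarith [ha.1])
  have h2 : 0 < Real.sqrt (Real.cosh u ^ 2 - b ^ 2) := Real.sqrt_pos.2 (aux_pos hb.1 hb.2 u)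
  exact div_le_div₀ hb.1.le hab h2 h1

lemma G_tendsto_zero : Tendsto G (𝓝[>] (0:ℝ)) (𝓝 0) := by
  have hc : ContinuousAt (fun d : ℝ => d / Real.sqrt (1 - d ^ 2) * 2) 0 := by
    apply ContinuousAt.mul _ continuousAt_const
    apply ContinuousAt.div continuousAt_id
    · exact (Real.continuous_sqrt.comp (by continuity)).continuousAt
    · simp
  have hupper : Tendsto (fun d : ℝ => d / Real.sqrt (1 - d ^ 2) * 2) (𝓝[>] (0:ℝ)) (𝓝 0) := by
    have := hc.tendsto.mono_left (nhdsWithin_le_nhds (s := Set.Ioi (0:ℝ)))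
    simpa using this
  refine tendsto_of_tendsto_of_tendsto_of_le_of_le' tendsto_const_nhds hupper ?_ ?_
  · filter_upwards [self_mem_nhdsWithin] with d hd
    exact G_nonneg (le_of_lt hd)
  · filter_upwards [Ioo_mem_nhdsGT_of_mem (by constructor <;> norm_num : (0:ℝ) ∈ Ico (0:ℝ) 1)]
      with d hd
    exact G_le hd.1 hd.2

lemma sinh_le_two_mul {u : ℝ} (hu0 : 0 ≤ u) (hu1 : u ≤ 1/2) : Real.sinh u ≤ 2 * u := by
  have h1 : Real.exp (-u) * Real.exp u = 1 := by rw [← Real.exp_add]; simp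
  have h2 : 1 - u ≤ Real.exp (-u) := by linarith [Real.add_one_le_exp (-u)]
  have he2 : Real.exp u ≤ 2 := by
    have h3 : Real.exp u ≤ Real.exp (1/2) := Real.exp_le_exp.2 hu1
    have h4 : Real.exp (1/2) * Real.exp (1/2) = Real.exp 1 := by
      rw [← Real.exp_add]; norm_num
    nlinarith [Real.exp_one_lt_d9, Real.exp_pos (1/2 : ℝ)]
  have ha : Real.exp u - 1 ≤ u * Real.exp u := by nlinarith [Real.exp_pos u]
  have hb : 1 - Real.exp (-u) ≤ u := by linarith
  rw [Real.sinh_eq]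
  nlinarith [Real.exp_pos u]

lemma sqrt_upper {d u : ℝ} (hd0 : 0 < d) (hd1 : d < 1) (hu : u ∈ Set.Ioc (0:ℝ) (1/2)) :
    Real.sqrt (Real.cosh u ^ 2 - d ^ 2) ≤ 2 * u + Real.sqrt (1 - d ^ 2) := by
  set ε := Real.sqrt (1 - d ^ 2) with hε
  have hε2 : ε ^ 2 = 1 - d ^ 2 := Real.sq_sqrt (by nlinarith)
  have hεpos : 0 ≤ ε := Real.sqrt_nonneg _
  have hsinh0 : 0 ≤ Real.sinh u := (Real.sinh_pos_iff.2 hu.1).le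
  have hsinh : Real.sinh u ≤ 2 * u := sinh_le_two_mul hu.1.le hu.2
  have hid : Real.cosh u ^ 2 - d ^ 2 = Real.sinh u ^ 2 + ε ^ 2 := by
    rw [Real.cosh_sq]; linarith
  rw [hid]
  have : Real.sinh u ^ 2 + ε ^ 2 ≤ (2 * u + ε) ^ 2 := by nlinarith [hu.1.le]
  calc Real.sqrt (Real.sinh u ^ 2 + ε ^ 2) ≤ Real.sqrt ((2 * u + ε) ^ 2) :=
        Real.sqrt_le_sqrt this
    _ = 2 * u + ε := Real.sqrt_sq (by linarith)

lemma integral_lower {d ε : ℝ} (hε : 0 < ε) :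
    ∫ u in (0:ℝ)..(1/2), d / (2 * u + ε) = d / 2 * (Real.log (1 + ε) - Real.log ε) := by
  have hderiv : ∀ u ∈ Set.uIcc (0:ℝ) (1/2),
      HasDerivAt (fun u : ℝ => d / 2 * Real.log (2 * u + ε)) (d / (2 * u + ε)) u := by
    intro u hu
    rw [Set.uIcc_of_le (by norm_num)] at hu
    have hne : 2 * u + ε ≠ 0 := by nlinarith [hu.1]
    have h1 : HasDerivAt (fun u : ℝ => 2 * u + ε) 2 u := by
      simpa using ((hasDerivAt_id u).const_mul 2).add_const ε
    have h2 := (h1.log hne).const_mul (d / 2)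
    exact h2.congr_deriv (by ring)
  have hcont : IntervalIntegrable (fun u : ℝ => d / (2 * u + ε)) volume 0 (1/2) := by
    apply ContinuousOn.intervalIntegrable
    apply ContinuousOn.div continuousOn_const (by fun_prop)
    intro u hu
    rw [Set.uIcc_of_le (by norm_num)] at hu
    nlinarith [hu.1]
  rw [intervalIntegral.integral_eq_sub_of_hasDerivAt hderiv hcont]
  norm_num
  ring

lemma G_lower {d : ℝ} (hd0 : 0 < d) (hd1 : d < 1) :
    d / 2 * (Real.log (1 + Real.sqrt (1 - d ^ 2)) - Real.log (Real.sqrt (1 - d ^ 2))) ≤ G d := by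
  set ε := Real.sqrt (1 - d ^ 2) with hε
  have hεpos : 0 < ε := Real.sqrt_pos.2 (by nlinarith)
  have hint : IntegrableOn (fun u : ℝ => d / Real.sqrt (Real.cosh u ^ 2 - d ^ 2))
      (Set.Ioc 0 (1/2)) := (integrable_stmt hd0 hd1).mono_set Ioc_subset_Ioi_self
  have hlow_int : IntegrableOn (fun u : ℝ => d / (2 * u + ε)) (Set.Ioc 0 (1/2)) := by
    apply (ContinuousOn.integrableOn_Icc ?_).mono_set Set.Ioc_subset_Icc_self
    apply ContinuousOn.div continuousOn_const (by fun_prop)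
    intro u hu
    nlinarith [hu.1]
  have step1 : ∫ u in Set.Ioc (0:ℝ) (1/2), d / (2 * u + ε)
      ≤ ∫ u in Set.Ioc (0:ℝ) (1/2), d / Real.sqrt (Real.cosh u ^ 2 - d ^ 2) := by
    apply setIntegral_mono_on hlow_int hint measurableSet_Ioc
    intro u hu
    apply div_le_div_of_nonneg_left hd0.le (Real.sqrt_pos.2 (aux_pos hd0 hd1 u))
      (sqrt_upper hd0 hd1 hu)
  have step2 : ∫ u in Set.Ioc (0:ℝ) (1/2), d / Real.sqrt (Real.cosh u ^ 2 - d ^ 2) ≤ G d := by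
    apply setIntegral_mono_set (integrable_stmt hd0 hd1)
    · filter_upwards with u
      positivity
    · filter_upwards with u
      exact fun hu => Ioc_subset_Ioi_self hu
  have heq : ∫ u in Set.Ioc (0:ℝ) (1/2), d / (2 * u + ε)
      = d / 2 * (Real.log (1 + ε) - Real.log ε) := by
    rw [← intervalIntegral.integral_of_le (by norm_num : (0:ℝ) ≤ 1/2)]
    exact integral_lower hεpos
  linarith [step1, step2, heq ▸ step1]

lemma G_tendsto_atTop : Tendsto G (𝓝[<] (1:ℝ)) atTop := by
  have h1 : Tendsto (fun d : ℝ => Real.sqrt (1 - d ^ 2)) (𝓝[<] (1:ℝ)) (𝓝[>] (0:ℝ)) := by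
    rw [tendsto_nhdsWithin_iff]
    constructor
    · have : Tendsto (fun d : ℝ => Real.sqrt (1 - d ^ 2)) (𝓝 1) (𝓝 0) := by
        have hc : ContinuousAt (fun d : ℝ => Real.sqrt (1 - d ^ 2)) 1 :=
          (Real.continuous_sqrt.comp (by continuity)).continuousAt
        have : (fun d : ℝ => Real.sqrt (1 - d ^ 2)) 1 = 0 := by norm_num
        exact this ▸ hc.tendsto
      exact this.mono_left nhdsWithin_le_nhds
    · filter_upwards [Ioo_mem_nhdsLT_of_mem (by constructor <;> norm_num : (1:ℝ) ∈ Ioc (0:ℝ) 1)]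
        with d hd
      exact Real.sqrt_pos.2 (by nlinarith [hd.1, hd.2])
  have h2 : Tendsto (fun d : ℝ => Real.log (Real.sqrt (1 - d ^ 2))) (𝓝[<] (1:ℝ)) atBot :=
    Real.tendsto_log_nhdsGT_zero.comp h1
  have h3 : Tendsto (fun d : ℝ => 1/4 * -Real.log (Real.sqrt (1 - d ^ 2))) (𝓝[<] (1:ℝ)) atTop :=
    (tendsto_neg_atBot_atTop.comp h2).const_mul_atTop (by norm_num)
  apply tendsto_atTop_mono' _ _ h3
  filter_upwards [Ioo_mem_nhdsLT_of_mem (by constructor <;> norm_num : (1:ℝ) ∈ Ioc (1/2 : ℝ) 1)]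
    with d hd
  set ε := Real.sqrt (1 - d ^ 2) with hε
  have hd0 : 0 < d := by linarith [hd.1]
  have hεpos : 0 < ε := Real.sqrt_pos.2 (by nlinarith [hd.2])
  have hε1 : ε ≤ 1 := by
    have h : ε ≤ Real.sqrt 1 := Real.sqrt_le_sqrt (by nlinarith [hd0])
    simpa using h
  have hlogε : Real.log ε ≤ 0 := Real.log_nonpos hεpos.le hε1
  have hlog1 : 0 ≤ Real.log (1 + ε) := Real.log_nonneg (by linarith)
  have := G_lower hd0 hd.2
  have hd12 : 1/2 ≤ d := hd.1.le
  nlinarith [this]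

/-- For `0 < d < 1`, `G(d) = ∫_0^∞ d/√(cosh²u − d²) du` converges, `G` is
nondecreasing on `(0,1)`, `G(d) → 0` as `d → 0⁺`, and `G(d) → +∞` as `d → 1⁻`. -/
theorem stmt_5 :
    (∀ d : ℝ, 0 < d → d < 1 →
      IntegrableOn (fun u : ℝ => d / Real.sqrt (Real.cosh u ^ 2 - d ^ 2)) (Set.Ioi 0)) ∧
    MonotoneOn G (Set.Ioo (0 : ℝ) 1) ∧
    Tendsto G (𝓝[>] (0 : ℝ)) (𝓝 0) ∧
    Tendsto G (𝓝[<] (1 : ℝ)) atTop := by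
  exact ⟨fun d h1 h2 => integrable_stmt h1 h2, G_mono, G_tendsto_zero, G_tendsto_atTop⟩
end
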